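/- Let M be a compact metric space and φ: M → M continuous. Let G = {G_n} be an asymptotically additive sequence of bounded Borel functions on M with approximating sequence {G^(k)} ⊂ C(M). Then: (i) for every φ-invariant Borel probability measure P on M the limit G(P) = lim_{n→∞} (1/n) ∫ G_n dP exists and is finite; (ii) G(P) = lim_{k→∞} ∫ G^(k) dP; (iii) both limits are uniform in P over the set of φ-invariant measures; and (iv) the map P ↦ G(P) is continuous on the set of φ-invariant Borel probability measures with the weak topology. -/

import Mathlib

open MeasureTheory Filter Topology Set
open scoped ENNReal

variable {M : Type*} [MetricSpace M] [CompactSpace M] [MeasurableSpace M] [BorelSpace M]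

/-- Birkhoff sum `S_n V = ∑_{j<n} V ∘ φ^j`. -/
noncomputable def birkhoff (φ : M → M) (V : M → ℝ) (n : ℕ) (x : M) : ℝ :=
  ∑ j ∈ Finset.range n, V (φ^[j] x)

/-- Supremum norm `‖f‖_∞` valued in `ℝ≥0∞`. -/
noncomputable def supNorm (f : M → ℝ) : ℝ≥0∞ :=
  ⨆ x : M, ENNReal.ofReal |f x|

/-- `Gk` is an approximating sequence for `G`:
`lim_{k→∞} limsup_{n→∞} (1/n) ‖G_n − S_n G^{(k)}‖_∞ = 0`. -/
def ApproxSeq (φ : M → M) (G : ℕ → M → ℝ) (Gk : ℕ → M → ℝ) : Prop :=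
  Tendsto
    (fun k => Filter.limsup
      (fun n => supNorm (fun x => G n x - birkhoff φ (Gk k) n x) / (n : ℝ≥0∞)) atTop)
    atTop (nhds 0)

/-- `G = {G_n}` is an asymptotically additive sequence of bounded Borel functions. -/
def AsympAdd (φ : M → M) (G : ℕ → M → ℝ) : Prop :=
  (∀ n, Measurable (G n) ∧ ∃ C : ℝ, ∀ x, |G n x| ≤ C) ∧
  ∃ Gk : ℕ → M → ℝ, (∀ k, Continuous (Gk k)) ∧ ApproxSeq φ G Gk

/-- Bowen ball `B_n(x, ε)`. -/
def bowenBall (φ : M → M) (n : ℕ) (x : M) (ε : ℝ) : Set M :=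
  {y | ∀ k < n, dist (φ^[k] y) (φ^[k] x) < ε}

/-- `E` is `(ε,n)`-spanning. -/
def IsSpanning (φ : M → M) (n : ℕ) (ε : ℝ) (E : Finset M) : Prop :=
  ∀ x : M, ∃ y ∈ E, x ∈ bowenBall φ n y ε

/-- `E` is `(ε,n)`-separated. -/
def IsSeparated (φ : M → M) (n : ℕ) (ε : ℝ) (E : Finset M) : Prop :=
  ∀ x ∈ E, ∀ y ∈ E, x ≠ y → x ∉ bowenBall φ n y ε

/-- `S(G,ε,n)`. -/
noncomputable def spanSum (φ : M → M) (G : ℕ → M → ℝ) (ε : ℝ) (n : ℕ) : ℝ≥0∞ :=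
  ⨅ (E : Finset M) (_ : IsSpanning φ n ε E), ∑ x ∈ E, ENNReal.ofReal (Real.exp (G n x))

/-- `N(G,ε,n)`. -/
noncomputable def sepSum (φ : M → M) (G : ℕ → M → ℝ) (ε : ℝ) (n : ℕ) : ℝ≥0∞ :=
  ⨆ (E : Finset M) (_ : IsSeparated φ n ε E), ∑ x ∈ E, ENNReal.ofReal (Real.exp (G n x))

/-- Topological pressure of an asymptotically additive sequence, via `(ε,n)`-separated sets. -/
noncomputable def pressure (φ : M → M) (G : ℕ → M → ℝ) : EReal :=
  ⨆ (ε : ℝ) (_ : 0 < ε),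
    Filter.limsup (fun n : ℕ => (((n : ℝ)⁻¹ : ℝ) : EReal) * ENNReal.log (sepSum φ G ε n)) atTop

/-- Entropy of the partition of `M` induced by a map into a finite type. -/
noncomputable def mapEntropy (μ : Measure M) {α : Type} [Fintype α] (c : M → α) : ℝ :=
  ∑ a : α, Real.negMulLog ((μ (c ⁻¹' {a})).toReal)

/-- Kolmogorov–Sinai entropy of `φ` along a finite partition `P` (encoded as `P : M → Fin m`). -/
noncomputable def partKS (φ : M → M) (μ : Measure M) {m : ℕ} (P : M → Fin m) : ℝ :=
  ⨅ n : ℕ, ((n : ℝ) + 1)⁻¹ *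
    mapEntropy μ (fun x => fun i : Fin (n + 1) => P (φ^[(i : ℕ)] x))

/-- Kolmogorov–Sinai entropy `h_φ(μ)`. -/
noncomputable def ksEntropy (φ : M → M) (μ : Measure M) : ℝ≥0∞ :=
  ⨆ (m : ℕ) (P : M → Fin m) (_ : Measurable P), ENNReal.ofReal (partKS φ μ P)

/-- Set of `n`-periodic points of `φ`. -/
def perSet (φ : M → M) (n : ℕ) : Set M := {x | φ^[n] x = x}

/-- `Z_n(G) = ∑_{x ∈ M_n} e^{G_n(x)}`, as an extended nonnegative real. -/
noncomputable def perPartition (φ : M → M) (G : ℕ → M → ℝ) (n : ℕ) : ℝ≥0∞ :=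
  ∑' x : perSet φ n, ENNReal.ofReal (Real.exp (G n x))

/-- The periodic-orbit measure `P_n = Z_n⁻¹ ∑_{x ∈ M_n} e^{G_n(x)} δ_x`. -/
noncomputable def perGibbs (φ : M → M) (G : ℕ → M → ℝ) (n : ℕ) : Measure M :=
  (perPartition φ G n)⁻¹ •
    Measure.sum (fun x : perSet φ n => ENNReal.ofReal (Real.exp (G n x)) • Measure.dirac (x : M))

/-- Weak periodic specification property. -/
def WPS (φ : M → M) : Prop :=
  ∃ m : ℝ → ℕ → ℕ, ∃ N : ℝ → ℕ,
    (∀ δ : ℝ, 0 < δ → ∀ n, N δ ≤ n → m δ n < n) ∧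
    (∀ δ : ℝ, 0 < δ → ∀ n, N δ ≤ n → ∀ x : M,
      ∃ y ∈ perSet φ n, y ∈ bowenBall φ (n - m δ n) x δ) ∧
    Tendsto (fun δ : ℝ => Filter.limsup (fun n => (m δ n : ℝ≥0∞) / (n : ℝ≥0∞)) atTop)
      (𝓝[>] (0 : ℝ)) (nhds 0)

/-- Specification property (S). -/
def SpecProp (φ : M → M) : Prop :=
  ∀ δ : ℝ, 0 < δ → ∃ N : ℕ, ∀ (r : ℕ) (a b : Fin r → ℕ) (pts : Fin r → M),
    (∀ i, a i ≤ b i) →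
    (∀ i j, i ≠ j → ∀ k, a i ≤ k → k ≤ b i → ∀ l, a j ≤ l → l ≤ b j → N ≤ Nat.dist k l) →
    ∃ x : M, ∀ i, ∀ k, a i ≤ k → k ≤ b i → dist (φ^[k] x) (φ^[k] (pts i)) < δ

/-- Condition (PAP): finitely many periodic points and periodic approximation of pressure. -/
def PAP (φ : M → M) : Prop :=
  (∀ n : ℕ, 0 < n → (perSet φ n).Finite) ∧
  ∀ G : ℕ → M → ℝ, AsympAdd φ G →
    Tendsto (fun n : ℕ => (((n : ℝ)⁻¹ : ℝ) : EReal) * ENNReal.log (perPartition φ G n)) atTop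
      (nhds (pressure φ G))

/-- Condition (USCE): finite topological entropy and upper semicontinuous entropy map. -/
def USCE (φ : M → M) : Prop :=
  pressure φ (fun _ _ => (0 : ℝ)) ≠ ⊤ ∧
  UpperSemicontinuousOn (fun μ : ProbabilityMeasure M => ksEntropy φ (μ : Measure M))
    {μ : ProbabilityMeasure M | (μ : Measure M).map φ = (μ : Measure M)}

/-- Empirical measure `μ_n^x`. -/
noncomputable def empMeas (φ : M → M) (n : ℕ) (x : M) : Measure M :=
  ((n : ℝ≥0∞))⁻¹ • ∑ i ∈ Finset.range n, Measure.dirac (φ^[i] x)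

/-- Weak Gibbs property of `P` for `G`, with (finite, real) pressure `p`. -/
def WeakGibbs (φ : M → M) (G : ℕ → M → ℝ) (p : ℝ) (P : Measure M) : Prop :=
  ∃ K : ℕ → ℝ → ℝ,
    (∀ n : ℕ, ∀ ε : ℝ, 0 < ε → 1 ≤ K n ε) ∧
    (∀ n : ℕ, 0 < n → ∀ ε : ℝ, 0 < ε → ∀ x : M,
      ENNReal.ofReal (Real.exp (G n x - n * p)) / ENNReal.ofReal (K n ε)
          ≤ P (bowenBall φ n x ε) ∧
      P (bowenBall φ n x ε)
          ≤ ENNReal.ofReal (K n ε) * ENNReal.ofReal (Real.exp (G n x - n * p))) ∧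
    Tendsto (fun ε : ℝ => Filter.limsup (fun n => ENNReal.ofReal (Real.log (K n ε) / n)) atTop)
      (𝓝[>] (0 : ℝ)) (nhds 0)


set_option linter.unusedSectionVars false

section Aux

variable {M : Type*} [MetricSpace M] [CompactSpace M] [MeasurableSpace M] [BorelSpace M]

lemma integrable_of_bdd {μ : Measure M} [IsFiniteMeasure μ] {f : M → ℝ}
    (hf : Measurable f) {C : ℝ} (hC : ∀ x, |f x| ≤ C) : Integrable f μ :=
  ⟨hf.aestronglyMeasurable,
    HasFiniteIntegral.of_bounded (C := C) (Filter.Eventually.of_forall fun x => by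
      simpa [Real.norm_eq_abs] using hC x)⟩

lemma continuous_integrable {μ : Measure M} [IsFiniteMeasure μ] [Nonempty M] {f : M → ℝ}
    (hf : Continuous f) : Integrable f μ := by
  obtain ⟨x0, -, hx0⟩ := isCompact_univ.exists_isMaxOn univ_nonempty
    hf.abs.continuousOn
  exact integrable_of_bdd hf.measurable (fun x => hx0 (mem_univ x))

lemma integral_comp_iterate {φ : M → M} (hφ : Continuous φ) {μ : Measure M}
    (hinv : μ.map φ = μ) {g : M → ℝ} (hg : Continuous g) (j : ℕ) :
    ∫ x, g (φ^[j] x) ∂μ = ∫ x, g x ∂μ := by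
  induction j with
  | zero => simp
  | succ j ih =>
    have h1 : ∫ x, g (φ^[j] x) ∂(μ.map φ) = ∫ x, g (φ^[j] (φ x)) ∂μ :=
      integral_map hφ.measurable.aemeasurable
        ((hg.comp (hφ.iterate j)).aestronglyMeasurable)
    calc ∫ x, g (φ^[j+1] x) ∂μ = ∫ x, g (φ^[j] (φ x)) ∂μ := by
            simp only [Function.iterate_succ_apply]
      _ = ∫ x, g (φ^[j] x) ∂(μ.map φ) := h1.symm
      _ = ∫ x, g (φ^[j] x) ∂μ := by rw [hinv]
      _ = ∫ x, g x ∂μ := ih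

lemma integral_birkhoff {φ : M → M} (hφ : Continuous φ) {μ : Measure M}
    [IsFiniteMeasure μ] [Nonempty M]
    (hinv : μ.map φ = μ) {g : M → ℝ} (hg : Continuous g) (n : ℕ) :
    ∫ x, birkhoff φ g n x ∂μ = n * ∫ x, g x ∂μ := by
  unfold birkhoff
  rw [integral_finset_sum _ (fun j _ =>
    show Integrable (fun x => g (φ^[j] x)) μ from continuous_integrable (hg.comp (hφ.iterate j)))]
  simp [integral_comp_iterate hφ hinv hg]

lemma abs_le_toReal_supNorm {f : M → ℝ} (hf : supNorm f ≠ ⊤) (x : M) :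
    |f x| ≤ (supNorm f).toReal := by
  have h1 : ENNReal.ofReal |f x| ≤ supNorm f := le_iSup (fun x => ENNReal.ofReal |f x|) x
  exact (ENNReal.ofReal_le_iff_le_toReal hf).mp h1

lemma supNorm_le {f : M → ℝ} {C : ℝ} (hC : ∀ x, |f x| ≤ C) : supNorm f ≤ ENNReal.ofReal C :=
  iSup_le fun x => ENNReal.ofReal_le_ofReal (hC x)

lemma continuous_integral_fn [Nonempty M] {g : M → ℝ} (hg : Continuous g) :
    Continuous fun μ : ProbabilityMeasure M => ∫ x, g x ∂(μ : Measure M) := by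
  rw [continuous_iff_continuousAt]
  intro μ
  have := (ProbabilityMeasure.tendsto_iff_forall_integral_tendsto
    (F := 𝓝 μ) (μs := id) (μ := μ)).mp tendsto_id
  exact this (BoundedContinuousFunction.mkOfCompact ⟨g, hg⟩)

end Aux


noncomputable def dSeq (φ : M → M) (G : ℕ → M → ℝ) (Gk : ℕ → M → ℝ) (k n : ℕ) : ℝ≥0∞ :=
  supNorm (fun x => G n x - birkhoff φ (Gk k) n x) / (n : ℝ≥0∞)

lemma birkhoff_continuous {φ : M → M} (hφ : Continuous φ) {g : M → ℝ} (hg : Continuous g)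
    (n : ℕ) : Continuous (birkhoff φ g n) := by
  unfold birkhoff
  exact continuous_finset_sum _ fun j _ => hg.comp (hφ.iterate j)

lemma supNorm_diff_ne_top [Nonempty M] {φ : M → M} (hφ : Continuous φ)
    {G : ℕ → M → ℝ} (hGbdd : ∀ n, ∃ C : ℝ, ∀ x, |G n x| ≤ C)
    {g : M → ℝ} (hg : Continuous g) (n : ℕ) :
    supNorm (fun x => G n x - birkhoff φ g n x) ≠ ⊤ := by
  obtain ⟨C, hC⟩ := hGbdd n
  obtain ⟨x0, -, hx0⟩ := isCompact_univ.exists_isMaxOn univ_nonempty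
    (birkhoff_continuous hφ hg n).abs.continuousOn
  have h : ∀ x, |G n x - birkhoff φ g n x| ≤ C + |birkhoff φ g n x0| := fun x =>
    (abs_sub _ _).trans (add_le_add (hC x) (hx0 (mem_univ x)))
  exact ne_top_of_le_ne_top ENNReal.ofReal_ne_top (supNorm_le h)

lemma key_bound [Nonempty M] {φ : M → M} (hφ : Continuous φ)
    {G : ℕ → M → ℝ} (hGmeas : ∀ n, Measurable (G n))
    (hGbdd : ∀ n, ∃ C : ℝ, ∀ x, |G n x| ≤ C)
    {Gk : ℕ → M → ℝ} (hGk : ∀ k, Continuous (Gk k))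
    {μ : Measure M} [IsProbabilityMeasure μ] (hinv : μ.map φ = μ)
    {n : ℕ} (hn : 1 ≤ n) (k : ℕ) :
    |(n : ℝ)⁻¹ * ∫ x, G n x ∂μ - ∫ x, Gk k x ∂μ| ≤ (dSeq φ G Gk k n).toReal := by
  obtain ⟨C, hC⟩ := hGbdd n
  have hGint : Integrable (G n) μ := integrable_of_bdd (hGmeas n) hC
  have hBint : Integrable (birkhoff φ (Gk k) n) μ :=
    continuous_integrable (birkhoff_continuous hφ (hGk k) n)
  have hDne : supNorm (fun x => G n x - birkhoff φ (Gk k) n x) ≠ ⊤ :=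
    supNorm_diff_ne_top hφ hGbdd (hGk k) n
  set D := supNorm (fun x => G n x - birkhoff φ (Gk k) n x) with hD
  have hpt : ∀ x, ‖G n x - birkhoff φ (Gk k) n x‖ ≤ D.toReal := fun x => by
    simpa [Real.norm_eq_abs] using abs_le_toReal_supNorm hDne x
  have hint : ‖∫ x, (G n x - birkhoff φ (Gk k) n x) ∂μ‖ ≤ D.toReal * (μ univ).toReal :=
    norm_integral_le_of_norm_le_const (Filter.Eventually.of_forall hpt)
  rw [integral_sub hGint hBint, integral_birkhoff hφ hinv (hGk k)] at hint
  have hμuniv : (μ univ).toReal = 1 := by simp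
  rw [hμuniv, mul_one, Real.norm_eq_abs] at hint
  have hn0 : (0 : ℝ) < n := by exact_mod_cast hn
  have hsplit : (n : ℝ)⁻¹ * ∫ x, G n x ∂μ - ∫ x, Gk k x ∂μ
      = (n : ℝ)⁻¹ * ((∫ x, G n x ∂μ) - n * ∫ x, Gk k x ∂μ) := by
    field_simp
  rw [hsplit, abs_mul, abs_inv, abs_of_pos hn0]
  have hdto : (dSeq φ G Gk k n).toReal = D.toReal / n := by
    simp [dSeq, ← hD, ENNReal.toReal_div]
  rw [hdto, div_eq_inv_mul]
  exact mul_le_mul_of_nonneg_left hint (by positivity)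

/-- **Existence, uniformity and continuity of `G(P) = lim (1/n) ∫ G_n dP`**
for an asymptotically additive sequence `G` of bounded Borel functions with approximating
sequence `Gk ⊆ C(M)`: there is a function `GG` on probability measures such that
`(1/n) ∫ G_n dμ → GG μ` and `∫ G^{(k)} dμ → GG μ`, both uniformly over the set of
`φ`-invariant Borel probability measures, and `GG` is continuous on that set (with the
weak topology). -/
theorem asympAdd_limit_exists_uniform_continuous
    {M : Type*} [MetricSpace M] [CompactSpace M] [MeasurableSpace M] [BorelSpace M]
    (φ : M → M) (hφ : Continuous φ)
    (G : ℕ → M → ℝ) (hGmeas : ∀ n, Measurable (G n))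
    (hGbdd : ∀ n, ∃ C : ℝ, ∀ x, |G n x| ≤ C)
    (Gk : ℕ → M → ℝ) (hGk : ∀ k, Continuous (Gk k))
    (happrox : ApproxSeq φ G Gk) :
    ∃ GG : ProbabilityMeasure M → ℝ,
      TendstoUniformlyOn
        (fun (n : ℕ) (μ : ProbabilityMeasure M) => (n : ℝ)⁻¹ * ∫ x, G n x ∂(μ : Measure M))
        GG atTop {μ : ProbabilityMeasure M | (μ : Measure M).map φ = (μ : Measure M)} ∧
      TendstoUniformlyOn
        (fun k (μ : ProbabilityMeasure M) => ∫ x, Gk k x ∂(μ : Measure M))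
        GG atTop {μ : ProbabilityMeasure M | (μ : Measure M).map φ = (μ : Measure M)} ∧
      ContinuousOn GG {μ : ProbabilityMeasure M | (μ : Measure M).map φ = (μ : Measure M)} := by
  classical
  rcases isEmpty_or_nonempty M with hM | hM
  · haveI : IsEmpty (ProbabilityMeasure M) := by
      refine ⟨fun μ => ?_⟩
      have h1 : (μ : Measure M) Set.univ = 1 := measure_univ
      rw [Set.univ_eq_empty_iff.mpr hM] at h1
      simp at h1
    refine ⟨fun _ => 0, ?_, ?_, fun μ _ => (IsEmpty.false μ).elim⟩
    · intro u hu
      exact Filter.Eventually.of_forall fun n μ hμ => (IsEmpty.false μ).elim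
    · intro u hu
      exact Filter.Eventually.of_forall fun n μ hμ => (IsEmpty.false μ).elim
  · set s : Set (ProbabilityMeasure M) :=
      {μ : ProbabilityMeasure M | (μ : Measure M).map φ = (μ : Measure M)} with hs
    -- Step 0: from the approximation hypothesis
    have happ' : ∀ ε : ℝ, 0 < ε → ∃ K : ℕ, ∀ k ≥ K,
        ∀ᶠ n in atTop, (dSeq φ G Gk k n).toReal < ε := by
      intro ε hε
      have h1 : ∀ᶠ k in atTop,
          Filter.limsup (fun n => dSeq φ G Gk k n) atTop < ENNReal.ofReal ε :=
        happrox.eventually_lt_const (ENNReal.ofReal_pos.mpr hε)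
      obtain ⟨K, hK⟩ := Filter.eventually_atTop.mp h1
      refine ⟨K, fun k hk => ?_⟩
      have h2 := Filter.eventually_lt_of_limsup_lt (hK k hk)
      filter_upwards [h2] with n h2n
      exact ENNReal.toReal_lt_of_lt_ofReal h2n
    -- Step 1: uniform closeness of the integrals of Gk
    have hclose : ∀ ε : ℝ, 0 < ε → ∃ K : ℕ, ∀ k ≥ K, ∀ l ≥ K, ∀ μ ∈ s,
        |(∫ x, Gk k x ∂(μ : Measure M)) - ∫ x, Gk l x ∂(μ : Measure M)| ≤ ε := by
      intro ε hε
      obtain ⟨K, hK⟩ := happ' (ε / 2) (by positivity)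
      refine ⟨K, fun k hk l hl μ hμ => ?_⟩
      have hinv : (μ : Measure M).map φ = (μ : Measure M) := hμ
      obtain ⟨n, hn1, hnk, hnl⟩ :=
        ((Filter.eventually_ge_atTop 1).and ((hK k hk).and (hK l hl))).exists
      have hbk := key_bound hφ hGmeas hGbdd hGk hinv hn1 k
      have hbl := key_bound hφ hGmeas hGbdd hGk hinv hn1 l
      calc |(∫ x, Gk k x ∂(μ : Measure M)) - ∫ x, Gk l x ∂(μ : Measure M)|
          ≤ |(∫ x, Gk k x ∂(μ : Measure M)) - (n : ℝ)⁻¹ * ∫ x, G n x ∂(μ : Measure M)|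
            + |(n : ℝ)⁻¹ * (∫ x, G n x ∂(μ : Measure M)) - ∫ x, Gk l x ∂(μ : Measure M)| :=
            abs_sub_le _ _ _
        _ ≤ (dSeq φ G Gk k n).toReal + (dSeq φ G Gk l n).toReal := by
            rw [abs_sub_comm]
            exact add_le_add hbk hbl
        _ ≤ ε / 2 + ε / 2 := add_le_add hnk.le hnl.le
        _ = ε := by ring
    -- Step 2: define GG as the limit
    set GG : ProbabilityMeasure M → ℝ :=
      fun μ => limUnder atTop (fun k => ∫ x, Gk k x ∂(μ : Measure M)) with hGG
    have hGGlim : ∀ μ ∈ s, Tendsto (fun k => ∫ x, Gk k x ∂(μ : Measure M)) atTop (𝓝 (GG μ)) := by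
      intro μ hμ
      have hc : CauchySeq (fun k => ∫ x, Gk k x ∂(μ : Measure M)) := by
        rw [Metric.cauchySeq_iff]
        intro ε hε
        obtain ⟨K, hK⟩ := hclose (ε / 2) (by positivity)
        refine ⟨K, fun m hm n hn => ?_⟩
        have := hK m hm n hn μ hμ
        rw [Real.dist_eq]
        linarith
      exact hc.tendsto_limUnder
    -- Step 3: part (ii): uniform convergence of ∫ Gk dμ to GG
    have hunif2 : TendstoUniformlyOn
        (fun k (μ : ProbabilityMeasure M) => ∫ x, Gk k x ∂(μ : Measure M)) GG atTop s := by
      rw [Metric.tendstoUniformlyOn_iff]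
      intro ε hε
      obtain ⟨K, hK⟩ := hclose (ε / 2) (by positivity)
      filter_upwards [Filter.eventually_ge_atTop K] with k hk μ hμ
      have hle : |GG μ - ∫ x, Gk k x ∂(μ : Measure M)| ≤ ε / 2 := by
        have h1 : Tendsto
            (fun l => |(∫ x, Gk l x ∂(μ : Measure M)) - ∫ x, Gk k x ∂(μ : Measure M)|)
            atTop (𝓝 |GG μ - ∫ x, Gk k x ∂(μ : Measure M)|) :=
          ((hGGlim μ hμ).sub tendsto_const_nhds).abs
        refine le_of_tendsto h1 ?_
        filter_upwards [Filter.eventually_ge_atTop K] with l hl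
        exact hK l hl k hk μ hμ
      calc dist (GG μ) (∫ x, Gk k x ∂(μ : Measure M))
          = |GG μ - ∫ x, Gk k x ∂(μ : Measure M)| := Real.dist_eq _ _
        _ ≤ ε / 2 := hle
        _ < ε := by linarith
    -- Step 4: part (i): uniform convergence of the Birkhoff averages to GG
    have hunif1 : TendstoUniformlyOn
        (fun (n : ℕ) (μ : ProbabilityMeasure M) =>
          (n : ℝ)⁻¹ * ∫ x, G n x ∂(μ : Measure M)) GG atTop s := by
      rw [Metric.tendstoUniformlyOn_iff]
      intro ε hε
      obtain ⟨K1, hK1⟩ := happ' (ε / 2) (by positivity)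
      have h2 := Metric.tendstoUniformlyOn_iff.mp hunif2 (ε / 2) (by positivity)
      obtain ⟨k, hk1, hk2⟩ := (h2.and (Filter.eventually_ge_atTop K1)).exists
      filter_upwards [hK1 k hk2, Filter.eventually_ge_atTop 1] with n hn1 hn2 μ hμ
      have hinv : (μ : Measure M).map φ = (μ : Measure M) := hμ
      have hb := key_bound hφ hGmeas hGbdd hGk hinv hn2 k
      calc dist (GG μ) ((n : ℝ)⁻¹ * ∫ x, G n x ∂(μ : Measure M))
          ≤ dist (GG μ) (∫ x, Gk k x ∂(μ : Measure M))
            + dist (∫ x, Gk k x ∂(μ : Measure M))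
              ((n : ℝ)⁻¹ * ∫ x, G n x ∂(μ : Measure M)) := dist_triangle _ _ _
        _ < ε / 2 + ε / 2 := by
            refine add_lt_add_of_lt_of_le (hk1 μ hμ) ?_
            rw [Real.dist_eq, abs_sub_comm]
            exact hb.trans hn1.le
        _ = ε := by ring
    -- Step 5: continuity of GG on s
    have hcont : ContinuousOn GG s :=
      hunif2.continuousOn (Filter.Frequently.of_forall fun k =>
        (continuous_integral_fn (hGk k)).continuousOn)
    exact ⟨GG, hunif1, hunif2, hcont⟩
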